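/- Suppose a ∈ K^× is not contained in any proper subfield of K, and F contains no m-th root of unity other than 1. Then Aut_F(A) = {G_c : c ∈ K^×}, this group is isomorphic to the kernel of N_{K/F} : K^× → F^×, and every F-automorphism of A = (K/F,σ,a) is inner. -/

import Mathlib

open Finset

/-- The unit element `t^0` of the nonassociative cyclic algebra, in coordinates. -/
def cycOne (K : Type*) [Zero K] [One K] (m : ℕ) : Fin m → K :=
  fun k => if (k : ℕ) = 0 then 1 else 0

/-- The embedding `x ↦ x t^0` of `K` into the nonassociative cyclic algebra. -/
def cycEmb (K : Type*) [Zero K] (m : ℕ) (x : K) : Fin m → K :=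
  fun i => if (i : ℕ) = 0 then x else 0

section

variable {F K : Type*} [Field F] [Field K] [Algebra F K]

/-- Coordinates of the product in the nonassociative cyclic algebra `(K/F, σ, a)`:
`(x t^i) ∘ (y t^j) = x σ^i(y) t^{i+j}` if `i+j < m` and
`(x t^i) ∘ (y t^j) = x σ^i(y) σ^{i+j-m}(a) t^{i+j-m}` if `i+j ≥ m`. -/
def cycMul (m : ℕ) (σ : K ≃ₐ[F] K) (a : K) (u v : Fin m → K) : Fin m → K :=
  fun k =>
    (∑ i : Fin m, ∑ j : Fin m,
        if (i : ℕ) + (j : ℕ) = (k : ℕ) then u i * (σ ^ (i : ℕ)) (v j) else 0) +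
      ∑ i : Fin m, ∑ j : Fin m,
        if (i : ℕ) + (j : ℕ) = (k : ℕ) + m then
          u i * (σ ^ (i : ℕ)) (v j) * (σ ^ (k : ℕ)) a
        else 0

/-- The field norm `N_{K/F}(k) = ∏_{l=0}^{m-1} σ^l(k)`. -/
def cycNorm (m : ℕ) (σ : K ≃ₐ[F] K) (k : K) : K :=
  ∏ l ∈ Finset.range m, (σ ^ l) k

/-- The map `H_{τ,k} : x t^i ↦ τ(x) (∏_{l=0}^{i-1} σ^l(k)) t^i`. -/
def cycH (m : ℕ) (σ τ : K ≃ₐ[F] K) (k : K) (u : Fin m → K) : Fin m → K :=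
  fun i => τ (u i) * ∏ l ∈ Finset.range (i : ℕ), (σ ^ l) k

/-- The map `G_c : x t^i ↦ x c⁻¹ σ^i(c) t^i`. -/
def cycG (m : ℕ) (σ : K ≃ₐ[F] K) (c : K) (u : Fin m → K) : Fin m → K :=
  fun i => u i * c⁻¹ * (σ ^ (i : ℕ)) c

/-- `H` is an `F`-automorphism of the nonassociative cyclic algebra `(K/F, σ, a)`. -/
def IsCycAut (m : ℕ) (σ : K ≃ₐ[F] K) (a : K) (H : (Fin m → K) → (Fin m → K)) : Prop :=
  Function.Bijective H ∧
    (∀ u v, H (u + v) = H u + H v) ∧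
    (∀ (c : F) (u : Fin m → K), H (c • u) = c • H u) ∧
    H (cycOne K m) = cycOne K m ∧
    ∀ u v, H (cycMul m σ a u v) = cycMul m σ a (H u) (H v)

/-- `H` is an inner `F`-automorphism of `(K/F, σ, a)`:
`H(z) = (w_l ∘ z) ∘ w` for some `w ≠ 0` with left inverse `w_l`. -/
def IsCycInner (m : ℕ) (σ : K ≃ₐ[F] K) (a : K) (H : (Fin m → K) → (Fin m → K)) : Prop :=
  ∃ w wl : Fin m → K, w ≠ 0 ∧ cycMul m σ a wl w = cycOne K m ∧
    ∀ z, H z = cycMul m σ a (cycMul m σ a wl z) w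

end

section Aux

variable {F K : Type*} [Field F] [Field K] [Algebra F K]

/-- single coordinate vector -/
def csingle (m : ℕ) (n : ℕ) (x : K) : Fin m → K := fun j => if (j : ℕ) = n then x else 0

lemma csingle_apply (m n : ℕ) (x : K) (j : Fin m) :
    csingle m n x j = if (j : ℕ) = n then x else 0 := rfl

lemma csingle_same (m n : ℕ) (h : n < m) (x : K) : csingle m n x ⟨n, h⟩ = x := by
  simp [csingle]

lemma sum_csingle (m : ℕ) (u : Fin m → K) : (∑ p : Fin m, csingle m (p : ℕ) (u p)) = u := by
  funext j
  rw [Finset.sum_apply]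
  rw [Finset.sum_eq_single j]
  · simp [csingle]
  · intro b _ hb
    have : (j : ℕ) ≠ (b : ℕ) := fun h => hb (Fin.ext h.symm)
    simp [csingle, this]
  · simp

lemma csingle_add (m n : ℕ) (x y : K) :
    csingle m n (x + y) = csingle m n x + csingle m n y := by
  funext j; by_cases h : (j : ℕ) = n <;> simp [csingle, h]

lemma csingle_smul (m n : ℕ) (c : F) (x : K) :
    csingle m n (c • x) = c • csingle m n x := by
  funext j; by_cases h : (j : ℕ) = n <;> simp [csingle, h]

lemma cycMul_single_single (m : ℕ) (σ : K ≃ₐ[F] K) (a : K) {p q : ℕ}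
    (hp : p < m) (hq : q < m) (x y : K) :
    cycMul m σ a (csingle m p x) (csingle m q y) =
      if h : p + q < m then csingle m (p + q) (x * (σ ^ p) y)
      else csingle m (p + q - m) (x * (σ ^ p) y * (σ ^ (p + q - m)) a) := by
  funext k
  have collapse : ∀ (f : Fin m → Fin m → K),
      (∀ (i j : Fin m), ((i:ℕ) ≠ p ∨ (j:ℕ) ≠ q) → f i j = 0) →
      (∑ i : Fin m, ∑ j : Fin m, f i j) = f ⟨p, hp⟩ ⟨q, hq⟩ := by
    intro f hf
    rw [Finset.sum_eq_single (⟨p, hp⟩ : Fin m)]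
    · rw [Finset.sum_eq_single (⟨q, hq⟩ : Fin m)]
      · intro b _ hb
        exact hf _ _ (Or.inr (fun h => hb (Fin.ext h)))
      · simp
    · intro b _ hb
      apply Finset.sum_eq_zero
      intro j _
      exact hf _ _ (Or.inl (fun h => hb (Fin.ext h)))
    · simp
  rw [cycMul]
  rw [collapse, collapse]
  · by_cases h : p + q < m
    · have h2 : p + q ≠ (k : ℕ) + m := by omega
      rw [dif_pos h]
      by_cases hk : (k : ℕ) = p + q
      · have h2' : p + q ≠ p + q + m := by omega
        simp [csingle, hk, h2']
        exact fun h0 => absurd h0 (by omega)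
      · have h3 : p + q ≠ (k : ℕ) := by omega
        simp [csingle, hk, h2, h3]
    · have h2 : p + q ≠ (k : ℕ) := by omega
      rw [dif_neg h]
      set r := p + q - m with hr
      have h4 : p + q = r + m := by omega
      by_cases hk : (k : ℕ) = r
      · have h5 : r + m ≠ (k : ℕ) := by omega
        have h5' : r + m ≠ r := by omega
        simp [csingle, hk, h4, h5, h5']
        exact fun h0 => absurd h0 (by omega)
      · have h5 : r + m ≠ (k : ℕ) + m := by omega
        have h6 : r + m ≠ (k : ℕ) := by omega
        simp [csingle, hk, h4, h5, h6]
        exact fun h0 => absurd h0 (by omega)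
  · intro i j hij
    rcases hij with h | h
    · simp [csingle, h]
    · simp [csingle, h]
  · intro i j hij
    rcases hij with h | h
    · simp [csingle, h]
    · simp [csingle, h]

end Aux

section Aux2

variable {F K : Type*} [Field F] [Field K] [Algebra F K]
variable (m : ℕ) (σ : K ≃ₐ[F] K) (a : K)

private lemma iteadd (P : Prop) [Decidable P] (A B : K) :
    (if P then A + B else 0) = (if P then A else 0) + (if P then B else 0) := by
  split_ifs <;> simp

lemma cycMul_zero_left (v : Fin m → K) : cycMul m σ a 0 v = 0 := by
  funext k; simp [cycMul]

lemma cycMul_zero_right (u : Fin m → K) : cycMul m σ a u 0 = 0 := by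
  funext k; simp [cycMul]

lemma cycMul_add_left (u u' v : Fin m → K) :
    cycMul m σ a (u + u') v = cycMul m σ a u v + cycMul m σ a u' v := by
  funext k
  simp only [cycMul, Pi.add_apply, add_mul, iteadd, Finset.sum_add_distrib]
  ring

lemma cycMul_add_right (u v v' : Fin m → K) :
    cycMul m σ a u (v + v') = cycMul m σ a u v + cycMul m σ a u v' := by
  funext k
  simp only [cycMul, Pi.add_apply, map_add, mul_add, add_mul, iteadd,
    Finset.sum_add_distrib]
  ring

lemma cycMul_smul_left (x : K) (u v : Fin m → K) :
    cycMul m σ a (x • u) v = x • cycMul m σ a u v := by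
  funext k
  simp only [cycMul, Pi.smul_apply, smul_eq_mul, mul_add, Finset.mul_sum, mul_ite,
    mul_zero, mul_assoc]

lemma cycMul_sum_left {ι : Type*} (s : Finset ι) (f : ι → Fin m → K) (v : Fin m → K) :
    cycMul m σ a (∑ i ∈ s, f i) v = ∑ i ∈ s, cycMul m σ a (f i) v := by
  classical
  induction s using Finset.cons_induction with
  | empty => simp [cycMul_zero_left]
  | cons i s hi ih => rw [Finset.sum_cons, Finset.sum_cons, cycMul_add_left, ih]

lemma cycMul_sum_right {ι : Type*} (s : Finset ι) (u : Fin m → K) (f : ι → Fin m → K) :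
    cycMul m σ a u (∑ i ∈ s, f i) = ∑ i ∈ s, cycMul m σ a u (f i) := by
  classical
  induction s using Finset.cons_induction with
  | empty => simp [cycMul_zero_right]
  | cons i s hi ih => rw [Finset.sum_cons, Finset.sum_cons, cycMul_add_right, ih]

lemma cycMul_emb_left (hm : 0 < m) (x : K) (u : Fin m → K) :
    cycMul m σ a (csingle m 0 x) u = x • u := by
  conv_lhs => rw [← sum_csingle m u]
  rw [cycMul_sum_right]
  have h1 : ∀ q : Fin m, cycMul m σ a (csingle m 0 x) (csingle m (q : ℕ) (u q)) =
      csingle m (q : ℕ) (x * u q) := by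
    intro q
    rw [cycMul_single_single m σ a hm q.isLt, dif_pos (by simpa using q.isLt)]
    simp
  rw [Finset.sum_congr rfl (fun q _ => h1 q)]
  have h2 := sum_csingle m (x • u)
  simpa using h2

lemma cycMul_emb_right (hm : 0 < m) (x : K) (u : Fin m → K) :
    cycMul m σ a u (csingle m 0 x) = fun k => u k * (σ ^ (k : ℕ)) x := by
  conv_lhs => rw [← sum_csingle m u]
  rw [cycMul_sum_left]
  have h1 : ∀ p : Fin m, cycMul m σ a (csingle m (p : ℕ) (u p)) (csingle m 0 x) =
      csingle m (p : ℕ) (u p * (σ ^ (p : ℕ)) x) := by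
    intro p
    rw [cycMul_single_single m σ a p.isLt hm, dif_pos (by simpa using p.isLt)]
    simp
  rw [Finset.sum_congr rfl (fun p _ => h1 p)]
  exact sum_csingle m _

lemma cycMul_emb_assoc (hm : 0 < m) (x : K) (u v : Fin m → K) :
    cycMul m σ a (cycMul m σ a (csingle m 0 x) u) v =
      cycMul m σ a (csingle m 0 x) (cycMul m σ a u v) := by
  rw [cycMul_emb_left m σ a hm, cycMul_emb_left m σ a hm, cycMul_smul_left]

end Aux2

section Aux3

variable {F K : Type*} [Field F] [Field K] [Algebra F K]
variable (m : ℕ) (σ : K ≃ₐ[F] K) (a : K)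

lemma nucleus_support (hm : 0 < m)
    (ha : ∀ i : ℕ, 0 < i → i < m → (σ ^ i) a ≠ a)
    (z : Fin m → K)
    (hz : ∀ u v, cycMul m σ a (cycMul m σ a z u) v = cycMul m σ a z (cycMul m σ a u v))
    (i : Fin m) (hi : (i : ℕ) ≠ 0) : z i = 0 := by
  set n : ℕ := (i : ℕ) with hn
  have hnm : n < m := i.isLt
  have hn0 : 0 < n := Nat.pos_of_ne_zero hi
  set u : Fin m → K := csingle m (m - n) 1 with hu
  set v : Fin m → K := csingle m n 1 with hv
  -- compute u ∘ v = a t^0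
  have huv : cycMul m σ a u v = csingle m 0 a := by
    rw [hu, hv, cycMul_single_single m σ a (by omega) hnm]
    rw [dif_neg (by omega)]
    have e1 : m - n + n - m = 0 := by omega
    rw [e1]
    simp
  -- RHS
  have hrhs : cycMul m σ a z (cycMul m σ a u v) i = z i * (σ ^ n) a := by
    rw [huv, cycMul_emb_right m σ a hm]
  -- LHS
  have hterm : ∀ p : Fin m,
      cycMul m σ a (cycMul m σ a (csingle m (p : ℕ) (z p)) u) v =
        csingle m (p : ℕ) (z p * (if (p : ℕ) < n then (σ ^ (p : ℕ)) a
          else (σ ^ ((p : ℕ) - n)) a)) := by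
    intro p
    by_cases hpn : (p : ℕ) < n
    · rw [hu, cycMul_single_single m σ a p.isLt (by omega), dif_pos (by omega)]
      rw [hv, cycMul_single_single m σ a (by omega) hnm, dif_neg (by omega)]
      have e2 : (p : ℕ) + (m - n) + n - m = (p : ℕ) := by omega
      rw [e2, if_pos hpn]
      simp
    · rw [hu, cycMul_single_single m σ a p.isLt (by omega), dif_neg (by omega)]
      have e3 : (p : ℕ) + (m - n) - m = (p : ℕ) - n := by omega
      rw [e3]
      rw [hv, cycMul_single_single m σ a (by omega) hnm, dif_pos (by omega)]
      have e4 : (p : ℕ) - n + n = (p : ℕ) := by omega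
      rw [e4, if_neg hpn]
      simp
  have hlhs : cycMul m σ a (cycMul m σ a z u) v i = z i * a := by
    conv_lhs => rw [← sum_csingle m z, cycMul_sum_left, cycMul_sum_left]
    rw [Finset.sum_congr rfl (fun p _ => hterm p)]
    rw [Finset.sum_apply]
    rw [Finset.sum_eq_single i]
    · rw [csingle_apply, if_pos rfl, if_neg (by omega)]
      have : (i : ℕ) - n = 0 := by omega
      rw [this]
      simp
    · intro b _ hb
      rw [csingle_apply, if_neg (fun h => hb (Fin.ext h.symm))]
    · simp
  have := hz u v
  have heq : z i * a = z i * (σ ^ n) a := by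
    rw [← hlhs, ← hrhs, this]
  by_contra hzi
  exact ha n hn0 hnm (by
    have := mul_left_cancel₀ hzi heq.symm
    exact this)

end Aux3

section Aux4

variable {F K : Type*} [Field F] [Field K] [Algebra F K]

lemma addmap_zero (m : ℕ) (H : (Fin m → K) → (Fin m → K))
    (hadd : ∀ u v, H (u + v) = H u + H v) : H 0 = 0 := by
  have h := hadd 0 0
  rw [add_zero] at h
  exact left_eq_add.mp h

lemma addmap_sum (m : ℕ) (H : (Fin m → K) → (Fin m → K))
    (hadd : ∀ u v, H (u + v) = H u + H v)
    {ι : Type*} (s : Finset ι) (f : ι → Fin m → K) :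
    H (∑ i ∈ s, f i) = ∑ i ∈ s, H (f i) := by
  classical
  induction s using Finset.cons_induction with
  | empty => simpa using addmap_zero m H hadd
  | cons i s hi ih => rw [Finset.sum_cons, Finset.sum_cons, hadd, ih]

variable (m : ℕ) (σ : K ≃ₐ[F] K)

/-- partial norm products -/
lemma prodpow_add (k : K) (p q : ℕ) :
    (∏ l ∈ Finset.range (p + q), (σ ^ l) k) =
      (∏ l ∈ Finset.range p, (σ ^ l) k) * (σ ^ p) (∏ l ∈ Finset.range q, (σ ^ l) k) := by
  rw [Finset.prod_range_add, map_prod]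
  congr 1
  refine Finset.prod_congr rfl fun l _ => ?_
  rw [← AlgEquiv.mul_apply, ← pow_add]

lemma prodpow_ne_zero (k : K) (hk : k ≠ 0) (n : ℕ) :
    (∏ l ∈ Finset.range n, (σ ^ l) k) ≠ 0 :=
  Finset.prod_ne_zero_iff.mpr fun l _ => by
    exact (map_ne_zero (σ ^ l)).mpr hk

lemma prodpow_mod (k : K) (hσm : σ ^ m = 1)
    (hnorm : (∏ l ∈ Finset.range m, (σ ^ l) k) = 1) (n : ℕ) :
    (∏ l ∈ Finset.range (n % m), (σ ^ l) k) = ∏ l ∈ Finset.range n, (σ ^ l) k := by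
  have hstep : ∀ r : ℕ, (∏ l ∈ Finset.range (r + m), (σ ^ l) k) =
      ∏ l ∈ Finset.range r, (σ ^ l) k := by
    intro r
    rw [prodpow_add, hnorm, map_one, mul_one]
  have key : ∀ q r : ℕ, (∏ l ∈ Finset.range (r + m * q), (σ ^ l) k) =
      ∏ l ∈ Finset.range r, (σ ^ l) k := by
    intro q
    induction q with
    | zero => simp
    | succ q ih =>
      intro r
      have : r + m * (q + 1) = (r + m * q) + m := by ring
      rw [this, hstep, ih]
  have hdecomp : n = n % m + m * (n / m) := (Nat.mod_add_div n m).symm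
  conv_rhs => rw [hdecomp]
  rw [key]

lemma telescope_prod (c : K) (hc : c ≠ 0) (n : ℕ) :
    (∏ l ∈ Finset.range n, (σ ^ l) (σ c * c⁻¹)) = (σ ^ n) c * c⁻¹ := by
  induction n with
  | zero => simp [mul_inv_cancel₀ hc]
  | succ n ih =>
    rw [Finset.prod_range_succ, ih]
    have h1 : (σ ^ n) (σ c * c⁻¹) = (σ ^ (n + 1)) c * ((σ ^ n) c)⁻¹ := by
      rw [map_mul, map_inv₀, pow_succ, AlgEquiv.mul_apply]
    rw [h1]
    have h2 : (σ ^ n) c ≠ 0 := by exact (map_ne_zero (σ ^ n)).mpr hc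
    field_simp

lemma cycNorm_telescope (c : K) (hc : c ≠ 0) (hσm : σ ^ m = 1) :
    cycNorm m σ (σ c * c⁻¹) = 1 := by
  rw [cycNorm, telescope_prod σ c hc, hσm]
  simp [mul_inv_cancel₀ hc]

end Aux4

section Aux5

variable {F K : Type*} [Field F] [Field K] [Algebra F K]

lemma hilbert90_cyclic [FiniteDimensional F K]
    (m : ℕ) (hm : 1 < m) (σ : K ≃ₐ[F] K)
    (hgen : ∀ τ : K ≃ₐ[F] K, τ ∈ Subgroup.zpowers σ)
    (horder : orderOf σ = m)
    (k : K) (hk : k ≠ 0) (hnorm : cycNorm m σ k = 1) :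
    ∃ c : K, c ≠ 0 ∧ k = σ c * c⁻¹ := by
  have hm0 : 0 < m := by omega
  have hσm : σ ^ m = 1 := by rw [← horder]; exact pow_orderOf_eq_one σ
  have hnorm' : (∏ l ∈ Finset.range m, (σ ^ l) k) = 1 := hnorm
  have hexp : ∀ τ : K ≃ₐ[F] K, ∃ n, n < m ∧ σ ^ n = τ := by
    intro τ
    obtain ⟨z, hz⟩ := hgen τ
    have hz' : σ ^ z = τ := hz
    refine ⟨(z % (m : ℤ)).toNat, ?_, ?_⟩
    · have h1 : 0 ≤ z % (m : ℤ) := Int.emod_nonneg z (by exact_mod_cast hm0.ne')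
      have h2 : z % (m : ℤ) < m := Int.emod_lt_of_pos z (by exact_mod_cast hm0)
      omega
    · have h1 : 0 ≤ z % (m : ℤ) := Int.emod_nonneg z (by exact_mod_cast hm0.ne')
      have e1 : σ ^ ((z % (m : ℤ)).toNat) = σ ^ (z % (m : ℤ)) := by
        rw [← zpow_natCast, Int.toNat_of_nonneg h1]
      have hz1 : σ ^ ((m : ℤ)) = 1 := by rw [zpow_natCast]; exact hσm
      have hdec : z = (m : ℤ) * (z / m) + z % m := (Int.mul_ediv_add_emod z m).symm
      have e2 : σ ^ z = σ ^ ((m : ℤ) * (z / m)) * σ ^ (z % (m : ℤ)) := by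
        rw [← zpow_add, ← hdec]
      have hσmz : σ ^ ((m : ℤ) * (z / m)) = 1 := by
        rw [zpow_mul, hz1, one_zpow]
      rw [hσmz, one_mul] at e2
      rw [e1, ← e2, hz']
  choose fc hfc1 hfc2 using hexp
  set f : (K ≃ₐ[F] K) → Kˣ := fun τ =>
    Units.mk0 (∏ l ∈ Finset.range (fc τ), (σ ^ l) k) (prodpow_ne_zero σ k hk _) with hf
  have hco : groupCohomology.IsMulCocycle₁ f := by
    intro τ₁ τ₂
    have hmod : σ ^ ((fc τ₁ + fc τ₂) % m) = σ ^ (fc τ₁ + fc τ₂) := by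
      rw [← horder]; exact pow_mod_orderOf σ _
    have hpq : σ ^ (fc (τ₁ * τ₂)) = σ ^ ((fc τ₁ + fc τ₂) % m) := by
      rw [hmod, pow_add, hfc2, hfc2, hfc2]
    have heq : fc (τ₁ * τ₂) = (fc τ₁ + fc τ₂) % m := by
      refine pow_injOn_Iio_orderOf ?_ ?_ hpq
      · simp [horder, hfc1]
      · simp [horder, Nat.mod_lt _ hm0]
    have hval : (∏ l ∈ Finset.range (fc (τ₁ * τ₂)), (σ ^ l) k) =
        τ₁ (∏ l ∈ Finset.range (fc τ₂), (σ ^ l) k) *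
          ∏ l ∈ Finset.range (fc τ₁), (σ ^ l) k := by
      rw [heq, prodpow_mod m σ k hσm hnorm', prodpow_add σ k, hfc2 τ₁]
      ring
    rw [Units.ext_iff]
    simpa [hf, AlgEquiv.smul_units_def] using hval
  obtain ⟨β, hβ⟩ := groupCohomology.isMulCoboundary₁_of_isMulCocycle₁_of_aut_to_units f hco
  refine ⟨(β : K), β.ne_zero, ?_⟩
  have h1 := hβ σ
  have hfcσ : fc σ = 1 := by
    have h3 : σ ^ (fc σ) = σ ^ 1 := by rw [hfc2, pow_one]
    exact pow_injOn_Iio_orderOf (by simp [horder, hfc1]) (by simp [horder, hm]) h3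
  have h2 : (f σ : K) = k := by
    rw [hf]
    simp [hfcσ, Finset.prod_range_one]
  rw [Units.ext_iff] at h1
  rw [AlgEquiv.smul_units_def] at h1
  have h3 : σ (β : K) / (β : K) = k := by
    rw [← h2, ← h1]
    simp
  rw [← h3, div_eq_mul_inv]

end Aux5

section Aux6

variable {F K : Type*} [Field F] [Field K] [Algebra F K]

lemma exists_pow_eq (m : ℕ) (hm0 : 0 < m) (σ : K ≃ₐ[F] K)
    (hgen : ∀ τ : K ≃ₐ[F] K, τ ∈ Subgroup.zpowers σ)
    (hσm : σ ^ m = 1) :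
    ∀ τ : K ≃ₐ[F] K, ∃ n, n < m ∧ σ ^ n = τ := by
  intro τ
  obtain ⟨z, hz⟩ := hgen τ
  have hz' : σ ^ z = τ := hz
  refine ⟨(z % (m : ℤ)).toNat, ?_, ?_⟩
  · have h1 : 0 ≤ z % (m : ℤ) := Int.emod_nonneg z (by exact_mod_cast hm0.ne')
    have h2 : z % (m : ℤ) < m := Int.emod_lt_of_pos z (by exact_mod_cast hm0)
    omega
  · have h1 : 0 ≤ z % (m : ℤ) := Int.emod_nonneg z (by exact_mod_cast hm0.ne')
    have e1 : σ ^ ((z % (m : ℤ)).toNat) = σ ^ (z % (m : ℤ)) := by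
      rw [← zpow_natCast, Int.toNat_of_nonneg h1]
    have hz1 : σ ^ ((m : ℤ)) = 1 := by rw [zpow_natCast]; exact hσm
    have hdec : z = (m : ℤ) * (z / m) + z % m := (Int.mul_ediv_add_emod z m).symm
    have e2 : σ ^ z = σ ^ ((m : ℤ) * (z / m)) * σ ^ (z % (m : ℤ)) := by
      rw [← zpow_add, ← hdec]
    have hσmz : σ ^ ((m : ℤ) * (z / m)) = 1 := by
      rw [zpow_mul, hz1, one_zpow]
    rw [hσmz, one_mul] at e2
    rw [e1, ← e2, hz']

/-- the subfield of elements fixed by an `F`-automorphism -/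
def fixedSubfield (τ : K ≃ₐ[F] K) : Subfield K where
  carrier := {x | τ x = x}
  mul_mem' := by intro x y hx hy; simp only [Set.mem_setOf_eq, map_mul] at *; rw [hx, hy]
  one_mem' := map_one τ
  add_mem' := by intro x y hx hy; simp only [Set.mem_setOf_eq, map_add] at *; rw [hx, hy]
  zero_mem' := map_zero τ
  neg_mem' := by intro x hx; simp only [Set.mem_setOf_eq, map_neg] at *; rw [hx]
  inv_mem' := by intro x hx; simp only [Set.mem_setOf_eq, map_inv₀] at *; rw [hx]

lemma cycG_mul_compat (m : ℕ) (σ : K ≃ₐ[F] K) (a : K) (hσm : σ ^ m = 1)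
    (c : K) (hc : c ≠ 0) (u v : Fin m → K) :
    cycG m σ c (cycMul m σ a u v) = cycMul m σ a (cycG m σ c u) (cycG m σ c v) := by
  funext k
  simp only [cycG, cycMul, add_mul, Finset.sum_mul, ite_mul, zero_mul]
  congr 1
  · refine Finset.sum_congr rfl fun i _ => Finset.sum_congr rfl fun j _ => ?_
    split_ifs with h
    · have h1 : (σ ^ (i : ℕ)) c ≠ 0 := by exact (map_ne_zero (σ ^ (i : ℕ))).mpr hc
      rw [map_mul, map_mul, map_inv₀, ← AlgEquiv.mul_apply, ← pow_add, h]
      field_simp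
    · rfl
  · refine Finset.sum_congr rfl fun i _ => Finset.sum_congr rfl fun j _ => ?_
    split_ifs with h
    · have h1 : (σ ^ (i : ℕ)) c ≠ 0 := by exact (map_ne_zero (σ ^ (i : ℕ))).mpr hc
      rw [map_mul, map_mul, map_inv₀, ← AlgEquiv.mul_apply, ← pow_add, h,
        pow_add, hσm, mul_one]
      field_simp
    · rfl

lemma cycH_one_eq_cycG (m : ℕ) (σ : K ≃ₐ[F] K) (c : K) (hc : c ≠ 0) :
    cycH m σ 1 (σ c * c⁻¹) = cycG m σ c := by
  funext u i
  show (1 : K ≃ₐ[F] K) (u i) * ∏ l ∈ Finset.range (i : ℕ), (σ ^ l) (σ c * c⁻¹) =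
    u i * c⁻¹ * (σ ^ (i : ℕ)) c
  rw [AlgEquiv.one_apply, telescope_prod σ c hc]
  ring

end Aux6

/-- Suppose `a ∈ K^×` lies in no proper subfield of `K` and `F` contains
no `m`-th root of unity other than `1`. Then `Aut_F(A) = {G_c : c ∈ K^×}`, this group is
isomorphic to `ker(N_{K/F})` (via `k ↦ H_{id,k}`), and every `F`-automorphism of
`A = (K/F,σ,a)` is inner. -/
theorem stmt3 {F K : Type*} [Field F] [Field K] [Algebra F K]
    (m : ℕ) (hm : 2 ≤ m) [IsGalois F K] [FiniteDimensional F K]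
    (hrank : Module.finrank F K = m)
    (σ : K ≃ₐ[F] K) (hgen : ∀ τ : K ≃ₐ[F] K, τ ∈ Subgroup.zpowers σ)
    (a : K) (ha0 : a ≠ 0)
    (hsub : ∀ L : Subfield K, a ∈ L → L = ⊤)
    (hroot : ∀ x : F, x ^ m = 1 → x = 1) :
    -- Aut_F(A) = {G_c : c ∈ K^×}
    (∀ H, IsCycAut m σ a H ↔ ∃ c : K, c ≠ 0 ∧ H = cycG m σ c) ∧
    -- all automorphisms are inner
    (∀ H, IsCycAut m σ a H → IsCycInner m σ a H) ∧
    -- `k ↦ H_{id,k}` is a multiplicative bijection from `ker N_{K/F}` onto `Aut_F(A)`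
    (∀ k : K, k ≠ 0 → cycNorm m σ k = 1 → ∃ c : K, c ≠ 0 ∧ cycH m σ 1 k = cycG m σ c) ∧
    (∀ c : K, c ≠ 0 → ∃ k : K, k ≠ 0 ∧ cycNorm m σ k = 1 ∧ cycH m σ 1 k = cycG m σ c) ∧
    (∀ k k' : K, k ≠ 0 → k' ≠ 0 → cycNorm m σ k = 1 → cycNorm m σ k' = 1 →
      cycH m σ 1 k = cycH m σ 1 k' → k = k') ∧
    (∀ k k' : K, k ≠ 0 → k' ≠ 0 → cycNorm m σ k = 1 → cycNorm m σ k' = 1 →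
      cycH m σ 1 (k * k') = cycH m σ 1 k ∘ cycH m σ 1 k') := by
  have hm0 : 0 < m := by omega
  have hm1 : 1 < m := hm
  -- basic group facts
  have hcard : Nat.card (K ≃ₐ[F] K) = m := by
    rw [IsGalois.card_aut_eq_finrank, hrank]
  have htop : Subgroup.zpowers σ = ⊤ := by
    rw [Subgroup.eq_top_iff']; exact hgen
  have horder : orderOf σ = m := by
    rw [← Nat.card_zpowers, htop, Subgroup.card_top, hcard]
  have hσm : σ ^ m = 1 := by rw [← horder]; exact pow_orderOf_eq_one σ
  have hexp := exists_pow_eq m hm0 σ hgen hσm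
  -- σ^i does not fix a for 0 < i < m
  have hfixa : ∀ i : ℕ, 0 < i → i < m → (σ ^ i) a ≠ a := by
    intro i hi him hia
    have hL : fixedSubfield (σ ^ i) = ⊤ := hsub _ hia
    have hσi : (σ ^ i) = (1 : K ≃ₐ[F] K) := by
      apply AlgEquiv.ext
      intro x
      have hx : x ∈ fixedSubfield (σ ^ i : K ≃ₐ[F] K) := by rw [hL]; trivial
      exact hx
    have hdvd : m ∣ i := by
      rw [← horder]
      exact orderOf_dvd_of_pow_eq_one hσi
    have := Nat.le_of_dvd hi hdvd
    omega
  -- commutativity of the Galois group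
  have hcomm : ∀ τ' : K ≃ₐ[F] K, σ * τ' = τ' * σ := by
    intro τ'
    obtain ⟨z, hz⟩ := hgen τ'
    have hz' : σ ^ z = τ' := hz
    rw [← hz']
    exact ((Commute.refl σ).zpow_right z).eq
  -- the forward direction of (1)
  have hforward : ∀ H, IsCycAut m σ a H → ∃ c : K, c ≠ 0 ∧ H = cycG m σ c := by
    intro H hH
    obtain ⟨hbij, hadd, hsmul, hone, hmul⟩ := hH
    -- Step A : H preserves the embedded copy of K
    have hNlH : ∀ z, (∀ u v, cycMul m σ a (cycMul m σ a z u) v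
          = cycMul m σ a z (cycMul m σ a u v)) →
        (∀ u v, cycMul m σ a (cycMul m σ a (H z) u) v
          = cycMul m σ a (H z) (cycMul m σ a u v)) := by
      intro z hzassoc u v
      obtain ⟨u0, rfl⟩ := hbij.2 u
      obtain ⟨v0, rfl⟩ := hbij.2 v
      rw [← hmul, ← hmul, ← hmul, ← hmul, hzassoc]
    have hsupp : ∀ (x : K) (j : Fin m), (j : ℕ) ≠ 0 → H (csingle m 0 x) j = 0 := by
      intro x j hj
      exact nucleus_support m σ a hm0 hfixa _
        (hNlH _ (fun u v => cycMul_emb_assoc m σ a hm0 x u v)) j hj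
    set φ : K → K := fun x => H (csingle m 0 x) ⟨0, hm0⟩ with hφ
    have hemb : ∀ x, H (csingle m 0 x) = csingle m 0 (φ x) := by
      intro x
      funext j
      by_cases hj : (j : ℕ) = 0
      · have : j = ⟨0, hm0⟩ := Fin.ext hj
        rw [this, csingle_same]
      · rw [hsupp x j hj, csingle_apply, if_neg hj]
    have hH0 : H 0 = 0 := addmap_zero m H hadd
    have hcs0 : (csingle m 0 (0 : K)) = 0 := by
      funext j; simp [csingle]
    have hφ0 : φ 0 = 0 := by
      rw [hφ]; simp only [hcs0, hH0]; rfl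
    have hφadd : ∀ x y, φ (x + y) = φ x + φ y := by
      intro x y
      rw [hφ]
      simp only [csingle_add, hadd]
      rfl
    have hcsmul : ∀ x y : K, csingle m 0 (x * y) =
        cycMul m σ a (csingle m 0 x) (csingle m 0 y) := by
      intro x y
      rw [cycMul_single_single m σ a hm0 hm0, dif_pos (by omega)]
      simp
    have hφmul : ∀ x y, φ (x * y) = φ x * φ y := by
      intro x y
      have h1 : H (csingle m 0 (x * y)) = csingle m 0 (φ x * φ y) := by
        rw [hcsmul, hmul, hemb, hemb, ← hcsmul]
      have h2 := congrFun h1 (⟨0, hm0⟩ : Fin m)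
      rw [hemb, csingle_same, csingle_same] at h2
      exact h2
    have hφone : φ 1 = 1 := by
      have h1 : cycOne K m = csingle m 0 (1 : K) := rfl
      have h2 := congrFun (h1 ▸ hone) (⟨0, hm0⟩ : Fin m)
      rw [hemb, csingle_same] at h2
      calc φ 1 = H (csingle m 0 1) ⟨0, hm0⟩ := by rw [hemb, csingle_same]
        _ = csingle m 0 (1 : K) ⟨0, hm0⟩ := h2
        _ = 1 := by rw [csingle_same]
    have hφsmul : ∀ (r : F) (x : K), φ (r • x) = r • φ x := by
      intro r x
      rw [hφ]
      simp only [csingle_smul, hsmul]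
      rfl
    have hφsurj : Function.Surjective φ := by
      intro y
      obtain ⟨z, hz⟩ := hbij.2 (csingle m 0 y)
      have hzsupp : ∀ j : Fin m, (j : ℕ) ≠ 0 → z j = 0 := by
        intro j hj
        refine nucleus_support m σ a hm0 hfixa z ?_ j hj
        intro u v
        apply hbij.1
        rw [hmul, hmul, hmul, hmul, hz, cycMul_emb_assoc m σ a hm0]
      have hzdec : z = csingle m 0 (z ⟨0, hm0⟩) := by
        funext j
        by_cases hj : (j : ℕ) = 0
        · have : j = ⟨0, hm0⟩ := Fin.ext hj
          rw [this, csingle_same]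
        · rw [hzsupp j hj, csingle_apply, if_neg hj]
      refine ⟨z ⟨0, hm0⟩, ?_⟩
      rw [hφ]
      show H (csingle m 0 (z ⟨0, hm0⟩)) ⟨0, hm0⟩ = y
      rw [← hzdec, hz, csingle_same]
    -- the ring hom and τ as an AlgEquiv
    set φR : K →+* K :=
      { toFun := φ, map_one' := hφone, map_mul' := hφmul,
        map_zero' := hφ0, map_add' := hφadd } with hφR
    have hφinj : Function.Injective φ := φR.injective
    set φA : K →ₐ[F] K := AlgHom.mk' φR hφsmul with hφA
    set τ : K ≃ₐ[F] K := AlgEquiv.ofBijective φA ⟨hφinj, hφsurj⟩ with hτ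
    have hτapp : ∀ x, τ x = φ x := fun x => rfl
    have hswap : ∀ x, σ (φ x) = φ (σ x) := by
      intro x
      have h1 := DFunLike.congr_fun (hcomm τ) x
      simpa [AlgEquiv.mul_apply, hτapp] using h1
    -- Step B : H (t) = kk • t
    set b : Fin m → K := H (csingle m 1 1) with hb
    have hrel : ∀ x : K, cycMul m σ a (csingle m 1 1) (csingle m 0 x)
        = cycMul m σ a (csingle m 0 (σ x)) (csingle m 1 1) := by
      intro x
      rw [cycMul_single_single m σ a hm1 hm0, dif_pos (by omega)]
      rw [cycMul_single_single m σ a hm0 hm1, dif_pos (by omega)]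
      simp
    have hptw : ∀ (x : K) (k : Fin m), b k * (σ ^ (k : ℕ)) (φ x) = φ (σ x) * b k := by
      intro x k
      have h1 := hmul (csingle m 1 1) (csingle m 0 x)
      rw [hrel, hmul, hemb, hemb, ← hb] at h1
      rw [cycMul_emb_right m σ a hm0, cycMul_emb_left m σ a hm0] at h1
      have h2 := congrFun h1 k
      simp only [Pi.smul_apply, smul_eq_mul] at h2
      exact h2.symm
    have hbsupp : ∀ k : Fin m, (k : ℕ) ≠ 1 → b k = 0 := by
      intro k hk
      by_contra hbk
      have h1 : ∀ x : K, (σ ^ (k : ℕ)) (φ x) = φ (σ x) := fun x =>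
        mul_left_cancel₀ hbk (by rw [hptw x k]; ring)
      have h3 : σ ^ ((k : ℕ)) = σ ^ 1 := by
        apply AlgEquiv.ext
        intro y
        obtain ⟨x, rfl⟩ := hφsurj y
        rw [h1 x, ← hswap x, pow_one]
      have h4 : (k : ℕ) = 1 :=
        pow_injOn_Iio_orderOf (by simp [horder, k.isLt]) (by simp [horder, hm1]) h3
      exact hk h4
    set kk : K := b ⟨1, hm1⟩ with hkk
    have hbdec : b = csingle m 1 kk := by
      funext j
      by_cases hj : (j : ℕ) = 1
      · have hj' : j = ⟨1, hm1⟩ := Fin.ext hj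
        rw [hj', csingle_same]
      · rw [hbsupp j hj, csingle_apply, if_neg hj]
    have hkkne : kk ≠ 0 := by
      intro h0
      have hb0 : b = 0 := by
        funext j
        by_cases hj : (j : ℕ) = 1
        · have hj' : j = ⟨1, hm1⟩ := Fin.ext hj
          rw [hj']
          exact h0
        · exact hbsupp j hj
      have h1 : csingle m 1 (1 : K) = 0 := hbij.1 (by rw [← hb, hb0, hH0])
      have h2 := congrFun h1 ⟨1, hm1⟩
      rw [csingle_same] at h2
      simpa using h2
    -- Step C : formula for H on monomials
    have hHC : ∀ n, n < m → ∀ x : K, H (csingle m n x) =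
        csingle m n (φ x * ∏ l ∈ Finset.range n, (σ ^ l) kk) := by
      intro n
      induction n with
      | zero => intro _ x; rw [hemb]; simp
      | succ n ih =>
        intro hn1 x
        have hn : n < m := by omega
        have hsplit : csingle m (n+1) x =
            cycMul m σ a (csingle m n x) (csingle m 1 1) := by
          rw [cycMul_single_single m σ a hn hm1, dif_pos hn1]
          simp
        rw [hsplit, hmul, ih hn, ← hb, hbdec,
          cycMul_single_single m σ a hn hm1, dif_pos hn1,
          Finset.prod_range_succ, ← mul_assoc]
    -- Step G : global formula for H
    have hHu : ∀ u, H u = fun i : Fin m =>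
        φ (u i) * ∏ l ∈ Finset.range (i : ℕ), (σ ^ l) kk := by
      intro u
      conv_lhs => rw [← sum_csingle m u]
      rw [addmap_sum m H hadd]
      rw [Finset.sum_congr rfl (fun (p : Fin m) _ => hHC (p : ℕ) p.isLt (u p))]
      exact sum_csingle m _
    -- Step D : the norm relation φ a = N a
    have huv2 : cycMul m σ a (csingle m (m-1) 1) (csingle m 1 1) = csingle m 0 a := by
      rw [cycMul_single_single m σ a (by omega) hm1, dif_neg (by omega)]
      have e1 : m - 1 + 1 - m = 0 := by omega
      rw [e1]
      simp
    have hNsplit : cycNorm m σ kk =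
        (∏ l ∈ Finset.range (m-1), (σ ^ l) kk) * (σ ^ (m-1)) kk := by
      rw [cycNorm]
      conv_lhs => rw [show m = m - 1 + 1 by omega]
      rw [Finset.prod_range_succ]
    have hnormrel : φ a = cycNorm m σ kk * a := by
      have h1 := hmul (csingle m (m-1) 1) (csingle m 1 1)
      rw [huv2, hemb, hHC (m-1) (by omega) 1, hHC 1 hm1 1,
        cycMul_single_single m σ a (by omega) hm1, dif_neg (by omega)] at h1
      have e1 : m - 1 + 1 - m = 0 := by omega
      rw [e1] at h1
      have h2 := congrFun h1 ⟨0, hm0⟩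
      rw [csingle_same, csingle_same] at h2
      rw [h2, hNsplit, hφone]
      simp only [one_mul, Finset.prod_range_one, pow_zero, AlgEquiv.one_apply]
    set N : K := cycNorm m σ kk with hN
    -- N is fixed by σ, hence in F
    have hσN : σ N = N := by
      have hP1 : (∏ l ∈ Finset.range (m+1), (σ ^ l) kk) = N * (σ ^ m) kk :=
        Finset.prod_range_succ _ _
      have hP2 : (∏ l ∈ Finset.range (m+1), (σ ^ l) kk)
          = (∏ l ∈ Finset.range m, (σ ^ (l+1)) kk) * (σ ^ 0) kk :=
        Finset.prod_range_succ' _ _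
      have h3 : σ N = ∏ l ∈ Finset.range m, (σ ^ (l+1)) kk := by
        rw [hN, cycNorm, map_prod]
        exact Finset.prod_congr rfl fun l _ => by rw [pow_succ', AlgEquiv.mul_apply]
      have h5 : (σ ^ m) kk = kk := by rw [hσm]; rfl
      have h6 : (σ ^ 0) kk = kk := by rw [pow_zero]; rfl
      have hP2' : (∏ l ∈ Finset.range (m+1), (σ ^ l) kk)
          = (∏ l ∈ Finset.range m, (σ ^ (l+1)) kk) * kk := by rw [hP2, h6]
      have hP1' : (∏ l ∈ Finset.range (m+1), (σ ^ l) kk) = N * kk := by rw [hP1, h5]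
      have h4 : σ N * kk = N * kk := by rw [h3, ← hP2', hP1']
      exact mul_right_cancel₀ hkkne h4
    have hfixall : ∀ τ' : K ≃ₐ[F] K, τ' N = N := by
      intro τ'
      obtain ⟨n, hn, rfl⟩ := hexp τ'
      clear hn
      induction n with
      | zero => rw [pow_zero]; rfl
      | succ n ih => rw [pow_succ, AlgEquiv.mul_apply, hσN, ih]
    have hNbot : N ∈ (⊥ : IntermediateField F K) := by
      rw [← IsGalois.fixedField_fixingSubgroup (⊥ : IntermediateField F K)]
      intro g
      exact hfixall g.1
    obtain ⟨x0, hx0⟩ := IntermediateField.mem_bot.mp hNbot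
    -- iterate τ on a
    have hτNfix : τ N = N := hfixall τ
    have hτa : τ a = N * a := hnormrel
    have hφpow : ∀ j : ℕ, (τ ^ j) a = N ^ j * a := by
      intro j
      induction j with
      | zero => simp
      | succ j ih =>
        rw [pow_succ', AlgEquiv.mul_apply, ih, map_mul, map_pow, hτNfix, hτa]
        ring
    have hτm : τ ^ m = 1 := by
      have hdvd : orderOf τ ∣ m := by rw [← hcard]; exact orderOf_dvd_natCard τ
      exact orderOf_dvd_iff_pow_eq_one.mp hdvd
    have hNm : N ^ m = 1 := by
      have h1 : (τ ^ m) a = N ^ m * a := hφpow m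
      rw [hτm, AlgEquiv.one_apply] at h1
      have h3 : N ^ m * a = 1 * a := by rw [← h1, one_mul]
      exact mul_right_cancel₀ ha0 h3
    have hNF : N = 1 := by
      have h1 : algebraMap F K (x0 ^ m) = 1 := by rw [map_pow, hx0, hNm]
      have h2 : x0 ^ m = 1 := by
        apply (algebraMap F K).injective
        rw [h1, map_one]
      rw [← hx0, hroot x0 h2, map_one]
    have hτafix : τ a = a := by rw [hτa, hNF, one_mul]
    -- hence τ = id
    have hφid : ∀ x : K, φ x = x := by
      intro x
      have hLt : fixedSubfield τ = ⊤ := hsub _ hτafix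
      have hx : x ∈ fixedSubfield τ := by rw [hLt]; trivial
      exact hx
    -- Hilbert 90
    have hNorm1 : cycNorm m σ kk = 1 := hNF
    obtain ⟨c, hc0, hkc⟩ := hilbert90_cyclic m hm1 σ hgen horder kk hkkne hNorm1
    refine ⟨c, hc0, ?_⟩
    funext u i
    rw [hHu u]
    show φ (u i) * ∏ l ∈ Finset.range (i : ℕ), (σ ^ l) kk = cycG m σ c u i
    rw [hφid, hkc, telescope_prod σ c hc0]
    show u i * ((σ ^ (i : ℕ)) c * c⁻¹) = u i * c⁻¹ * (σ ^ (i : ℕ)) c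
    ring
  -- backward direction of (1)
  have hbackward : ∀ (c : K), c ≠ 0 → IsCycAut m σ a (cycG m σ c) := by
    intro c hc
    have hσiC : ∀ i : ℕ, (σ ^ i) c ≠ 0 := fun i => by exact (map_ne_zero (σ ^ i)).mpr hc
    refine ⟨?_, ?_, ?_, ?_, ?_⟩
    · refine Function.bijective_iff_has_inverse.mpr ⟨cycG m σ c⁻¹, ?_, ?_⟩
      · intro u; funext i
        show (u i * c⁻¹ * (σ ^ (i : ℕ)) c) * (c⁻¹)⁻¹ * (σ ^ (i : ℕ)) c⁻¹ = u i
        rw [inv_inv, map_inv₀]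
        field_simp [hσiC (i : ℕ)]
        exact mul_div_cancel_right₀ _ (hσiC i)
      · intro u; funext i
        show (u i * (c⁻¹)⁻¹ * (σ ^ (i : ℕ)) c⁻¹) * c⁻¹ * (σ ^ (i : ℕ)) c = u i
        rw [inv_inv, map_inv₀]
        field_simp [hc, hσiC (i : ℕ)]
        ring
        exact mul_inv_cancel_right₀ (hσiC i) _
    · intro u v; funext i
      show ((u + v) i) * c⁻¹ * (σ ^ (i : ℕ)) c = _
      simp [cycG, add_mul]
    · intro r u; funext i
      show ((r • u) i) * c⁻¹ * (σ ^ (i : ℕ)) c = (r • cycG m σ c u) i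
      simp [cycG, smul_mul_assoc]
    · funext i
      by_cases h : (i : ℕ) = 0
      · simp [cycOne, cycG, h, inv_mul_cancel₀ hc]
      · simp [cycOne, cycG, h]
    · exact cycG_mul_compat m σ a hσm c hc
  have hiff : ∀ H, IsCycAut m σ a H ↔ ∃ c : K, c ≠ 0 ∧ H = cycG m σ c := by
    intro H
    constructor
    · exact hforward H
    · rintro ⟨c, hc, rfl⟩; exact hbackward c hc
  refine ⟨hiff, ?_, ?_, ?_, ?_, ?_⟩
  · -- inner
    intro H hH
    obtain ⟨c, hc, rfl⟩ := (hiff H).mp hH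
    refine ⟨csingle m 0 c, csingle m 0 c⁻¹, ?_, ?_, ?_⟩
    · intro h0
      have h1 := congrFun h0 ⟨0, hm0⟩
      rw [csingle_same] at h1
      exact hc (by simpa using h1)
    · rw [cycMul_single_single m σ a hm0 hm0, dif_pos (by omega)]
      funext j
      simp [csingle, cycOne, inv_mul_cancel₀ hc]
    · intro z
      rw [cycMul_emb_left m σ a hm0, cycMul_emb_right m σ a hm0]
      funext i
      show z i * c⁻¹ * (σ ^ (i : ℕ)) c = (c⁻¹ • z) i * (σ ^ (i : ℕ)) c
      simp only [Pi.smul_apply, smul_eq_mul]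
      ring
  · -- conjunct 3
    intro k hk hnorm
    obtain ⟨c, hc, hkc⟩ := hilbert90_cyclic m hm1 σ hgen horder k hk hnorm
    exact ⟨c, hc, by rw [hkc]; exact cycH_one_eq_cycG m σ c hc⟩
  · -- conjunct 4
    intro c hc
    refine ⟨σ c * c⁻¹, ?_, cycNorm_telescope m σ c hc hσm, cycH_one_eq_cycG m σ c hc⟩
    exact mul_ne_zero (by simpa using hc) (inv_ne_zero hc)
  · -- conjunct 5 : injectivity
    intro k k' hk hk' h1 h2 heq
    have h3 := congrFun (congrFun heq (fun _ => (1 : K))) ⟨1, hm1⟩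
    simpa [cycH, Finset.prod_range_one] using h3
  · -- conjunct 6 : multiplicativity
    intro k k' hk hk' h1 h2
    funext u i
    simp only [cycH, Function.comp_apply, AlgEquiv.one_apply, map_mul,
      Finset.prod_mul_distrib]
    ring
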